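/- Let X be a Banach space, μ a finite Borel measure on ℝ, t₀ ≤ a real numbers, and f : ℝ → X Bochner integrable on [t₀,a] with respect to μ. Define p(t) = ∫_{[t₀,t)} f dμ for t ∈ [t₀,a]. Then: (1) p is left-continuous at every t ∈ (t₀,a], i.e., p(s) → p(t) as s → t⁻; and (2) for every t ∈ [t₀,a), the right limit of p at t exists and equals p(t) + f(t) · μ({t}), i.e., p(s) → p(t) + μ({t}) · f(t) as s → t⁺. -/

import Mathlib

open Filter MeasureTheory

/-- The measure of `Ico s t` tends to `0` as `s → t⁻`, provided some `Ico s t`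
has finite measure. -/
lemma aux_tendsto_measure_Ico_left (ν : Measure ℝ) (t : ℝ)
    (hfin : ν (Set.Ico (t - 1) t) ≠ ⊤) :
    Tendsto (fun s => ν (Set.Ico s t)) (nhdsWithin t (Set.Iio t)) (nhds 0) := by
  have h1 : (atTop : Filter (Set.Iio t)).IsCountablyGenerated := by
    rw [← comap_coe_Iio_nhdsLT]
    infer_instance
  have hmem : (t - 1 : ℝ) ∈ Set.Iio t := by simp
  have h2 : Tendsto (fun s : Set.Iio t => ν (Set.Ico (s : ℝ) t)) atTop
      (nhds (ν (⋂ s : Set.Iio t, Set.Ico (s : ℝ) t))) := by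
    apply tendsto_measure_iInter_atTop
    · exact fun i => measurableSet_Ico.nullMeasurableSet
    · exact fun i j hij => Set.Ico_subset_Ico_left hij
    · exact ⟨⟨t - 1, hmem⟩, hfin⟩
  have hempty : (⋂ s : Set.Iio t, Set.Ico (s : ℝ) t) = ∅ := by
    ext x
    simp only [Set.mem_iInter, Set.mem_empty_iff_false, iff_false]
    intro h
    have hx : x < t := (h ⟨t - 1, hmem⟩).2
    have hs : (x + t) / 2 ∈ Set.Iio t := Set.mem_Iio.2 (by linarith)
    have := (h ⟨(x + t) / 2, hs⟩).1
    simp only at this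
    linarith
  rw [hempty, measure_empty] at h2
  rw [← map_coe_Iio_atTop (t : ℝ), tendsto_map'_iff]
  exact h2

/-- The measure of `Ioo t s` tends to `0` as `s → t⁺`, provided some `Ioo t s`
has finite measure. -/
lemma aux_tendsto_measure_Ioo_right (ν : Measure ℝ) (t : ℝ)
    (hfin : ν (Set.Ioo t (t + 1)) ≠ ⊤) :
    Tendsto (fun s => ν (Set.Ioo t s)) (nhdsWithin t (Set.Ioi t)) (nhds 0) := by
  have h2 := tendsto_measure_biInter_gt (μ := ν) (s := fun r => Set.Ioo t r) (a := t)
    (fun r _ => measurableSet_Ioo.nullMeasurableSet)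
    (fun i j _ hij => Set.Ioo_subset_Ioo_right hij)
    ⟨t + 1, by linarith, hfin⟩
  have hempty : (⋂ r > t, Set.Ioo t r) = ∅ := by
    ext x
    simp only [Set.mem_iInter, Set.mem_empty_iff_false, iff_false, Set.mem_Ioo]
    intro h
    have h1 := h (t + 1) (by linarith)
    have h2 := h x h1.1
    linarith [h2.2]
  rwa [hempty, measure_empty] at h2

/-- Jump formula for the Stieltjes primitive `p(t) = ∫_{[t₀,t)} f dμ` of a
Bochner integrable function `f` with respect to a finite Borel measure `μ`:
`p` is left-continuous on `(t₀,a]`, and at every `t ∈ [t₀,a)` the right limit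
of `p` exists and equals `p(t) + μ({t}) • f(t)`. -/
theorem stieltjes_primitive_regulated {X : Type*} [NormedAddCommGroup X]
    [NormedSpace ℝ X] [CompleteSpace X]
    (μ : Measure ℝ) [IsFiniteMeasure μ] (t₀ a : ℝ) (hta : t₀ ≤ a)
    (f : ℝ → X) (hf : IntegrableOn f (Set.Icc t₀ a) μ) :
    (∀ t ∈ Set.Ioc t₀ a,
      Tendsto (fun s => ∫ x in Set.Ico t₀ s, f x ∂μ)
        (nhdsWithin t (Set.Iio t)) (nhds (∫ x in Set.Ico t₀ t, f x ∂μ))) ∧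
    (∀ t ∈ Set.Ico t₀ a,
      Tendsto (fun s => ∫ x in Set.Ico t₀ s, f x ∂μ)
        (nhdsWithin t (Set.Ioi t))
        (nhds ((∫ x in Set.Ico t₀ t, f x ∂μ) + (μ {t}).toReal • f t))) := by
  set g : ℝ → X := (Set.Icc t₀ a).indicator f with hg_def
  have hg : Integrable g μ := hf.integrable_indicator measurableSet_Icc
  set ν : Measure ℝ := μ.withDensity (fun x => ‖g x‖₊) with hν_def
  have hνfin : ∀ s : Set ℝ, ν s ≠ ⊤ := by
    intro s
    refine ne_top_of_le_ne_top ?_ (measure_mono (Set.subset_univ s))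
    have : ν Set.univ = ∫⁻ x, ‖g x‖₊ ∂μ := by
      rw [hν_def, withDensity_apply _ MeasurableSet.univ, Measure.restrict_univ]
    rw [this]
    exact hg.2.ne
  have key : ∀ {A : Set ℝ}, MeasurableSet A → A ⊆ Set.Icc t₀ a →
      ‖∫ x in A, f x ∂μ‖ ≤ (ν A).toReal := by
    intro A hA hsub
    have h1 : ∫ x in A, f x ∂μ = ∫ x in A, g x ∂μ :=
      setIntegral_congr_fun hA (fun x hx => (Set.indicator_of_mem (hsub hx) f).symm)
    rw [h1]
    have h2 : (‖∫ x in A, g x ∂μ‖₊ : ENNReal) ≤ ν A := by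
      rw [hν_def, withDensity_apply _ hA]
      exact enorm_integral_le_lintegral_enorm _
    calc ‖∫ x in A, g x ∂μ‖ = ((‖∫ x in A, g x ∂μ‖₊ : ENNReal)).toReal := by simp
      _ ≤ (ν A).toReal := ENNReal.toReal_mono (hνfin A) h2
  constructor
  · intro t ht
    rw [tendsto_iff_norm_sub_tendsto_zero]
    have hlim : Tendsto (fun s => (ν (Set.Ico s t)).toReal)
        (nhdsWithin t (Set.Iio t)) (nhds 0) := by
      have h := aux_tendsto_measure_Ico_left ν t (hνfin _)
      have := (ENNReal.tendsto_toReal (by simp : (0 : ENNReal) ≠ ⊤)).comp h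
      simpa [Function.comp_def] using this
    refine squeeze_zero' (Eventually.of_forall fun _ => norm_nonneg _) ?_ hlim
    filter_upwards [Ioo_mem_nhdsLT_of_mem (Set.mem_Ioc.2 ⟨ht.1, le_refl t⟩)] with s hs
    have hs1 : t₀ < s := hs.1
    have hs2 : s < t := hs.2
    have hsub1 : Set.Ico t₀ s ⊆ Set.Icc t₀ a :=
      Set.Ico_subset_Icc_self.trans (Set.Icc_subset_Icc_right (hs2.le.trans ht.2))
    have hsub2 : Set.Ico s t ⊆ Set.Icc t₀ a := fun x hx =>
      ⟨hs1.le.trans hx.1, hx.2.le.trans ht.2⟩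
    have hsplit : (∫ x in Set.Ico t₀ s, f x ∂μ) + ∫ x in Set.Ico s t, f x ∂μ
        = ∫ x in Set.Ico t₀ t, f x ∂μ := by
      rw [← setIntegral_union (Set.Ico_disjoint_Ico_same) measurableSet_Ico
        (hf.mono_set hsub1) (hf.mono_set hsub2), Set.Ico_union_Ico_eq_Ico hs1.le hs2.le]
    have heq : (∫ x in Set.Ico t₀ s, f x ∂μ) - ∫ x in Set.Ico t₀ t, f x ∂μ
        = -∫ x in Set.Ico s t, f x ∂μ := by
      rw [← hsplit]; abel
    rw [heq, norm_neg]
    exact key measurableSet_Ico hsub2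
  · intro t ht
    rw [tendsto_iff_norm_sub_tendsto_zero]
    have hlim : Tendsto (fun s => (ν (Set.Ioo t s)).toReal)
        (nhdsWithin t (Set.Ioi t)) (nhds 0) := by
      have h := aux_tendsto_measure_Ioo_right ν t (hνfin _)
      have := (ENNReal.tendsto_toReal (by simp : (0 : ENNReal) ≠ ⊤)).comp h
      simpa [Function.comp_def] using this
    refine squeeze_zero' (Eventually.of_forall fun _ => norm_nonneg _) ?_ hlim
    filter_upwards [Ioo_mem_nhdsGT_of_mem (Set.mem_Ico.2 ⟨le_refl t, ht.2⟩)] with s hs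
    have hs1 : t < s := hs.1
    have hs2 : s < a := hs.2
    have hsub1 : Set.Ico t₀ t ⊆ Set.Icc t₀ a :=
      Set.Ico_subset_Icc_self.trans (Set.Icc_subset_Icc_right (ht.2.le))
    have hsub2 : Set.Ico t s ⊆ Set.Icc t₀ a := fun x hx =>
      ⟨ht.1.trans hx.1, hx.2.le.trans hs2.le⟩
    have hsub3 : Set.Ioo t s ⊆ Set.Icc t₀ a := Set.Ioo_subset_Ico_self.trans hsub2
    have hsubt : ({t} : Set ℝ) ⊆ Set.Icc t₀ a := by
      simp only [Set.singleton_subset_iff, Set.mem_Icc]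
      exact ⟨ht.1, ht.2.le⟩
    have hsplit1 : (∫ x in Set.Ico t₀ t, f x ∂μ) + ∫ x in Set.Ico t s, f x ∂μ
        = ∫ x in Set.Ico t₀ s, f x ∂μ := by
      rw [← setIntegral_union (Set.Ico_disjoint_Ico_same) measurableSet_Ico
        (hf.mono_set hsub1) (hf.mono_set hsub2), Set.Ico_union_Ico_eq_Ico ht.1 hs1.le]
    have hsplit2 : (∫ x in ({t} : Set ℝ), f x ∂μ) + ∫ x in Set.Ioo t s, f x ∂μ
        = ∫ x in Set.Ico t s, f x ∂μ := by
      rw [← setIntegral_union (by simp [Set.disjoint_singleton_left])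
        measurableSet_Ioo (hf.mono_set hsubt) (hf.mono_set hsub3)]
      rw [← Set.insert_eq, Set.Ioo_insert_left hs1]
    have hsingle : (∫ x in ({t} : Set ℝ), f x ∂μ) = (μ {t}).toReal • f t :=
      integral_singleton f t
    have heq : (∫ x in Set.Ico t₀ s, f x ∂μ)
        - ((∫ x in Set.Ico t₀ t, f x ∂μ) + (μ {t}).toReal • f t)
        = ∫ x in Set.Ioo t s, f x ∂μ := by
      rw [← hsplit1, ← hsplit2, hsingle]; abel
    rw [heq]
    exact key measurableSet_Ioo hsub3
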